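/- Let v be an x-vertex and u a 0-vertex that are K-adjacent (some K-edge joins v and u). Then for every feasible solution x*, the output values of the local algorithm satisfy x_v + x_u ≥ (1 − 1/R)·ω(x*), where x_u = 0. -/

import Mathlib

/-- An undirected multigraph with two-coloured vertices and two-coloured edges.
`isX v` means `v` is an x-vertex (otherwise `v` is a 0-vertex);
`isK e` means `e` is a K-edge (otherwise `e` is an I-edge). -/
structure ColoredMultigraph (V : Type) (E : Type) where
  ends : E → Sym2 V
  isX : V → Prop
  isK : E → Prop

namespace ColoredMultigraph

variable {V E : Type} (G : ColoredMultigraph V E)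

/-- Edge `e` joins vertices `a` and `b`. -/
def Joins (e : E) (a b : V) : Prop := G.ends e = s(a, b)

/-- `AltWalk G v c c' u n` : there is an alternating walk from `v` to `u` whose
first edge has colour `c` (`true` = K-edge, `false` = I-edge), whose last edge
has colour `c'`, and whose K-length (number of K-edges) is `n`. -/
inductive AltWalk : V → Bool → Bool → V → ℕ → Prop
  | single (e : E) (a b : V) (c : Bool) :
      G.Joins e a b → (G.isK e ↔ c = true) → AltWalk a c c b (cond c 1 0)
  | cons (e : E) (a b : V) (c c' : Bool) (u : V) (n : ℕ) :
      G.Joins e a b → (G.isK e ↔ c = true) → AltWalk b (!c) c' u n →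
      AltWalk a c c' u (cond c 1 0 + n)

/-- `a(v,X,Y,0)` : the minimum K-length of a `(v,X,Y,0)`-walk, that is, a walk
from `v` to some 0-vertex starting with an X-edge and ending with a Y-edge
(`∞` if no such walk exists). -/
noncomputable def walkInf (v : V) (X Y : Bool) : ℕ∞ :=
  sInf {n : ℕ∞ | ∃ m : ℕ, n = m ∧ ∃ u, G.AltWalk v X Y u m ∧ ¬ G.isX u}

/-- `A(v,X)` : the maximum K-length of an alternating walk starting at `v` with
an X-edge (`∞` if walks of arbitrarily large K-length exist). -/
noncomputable def walkSup (v : V) (X : Bool) : ℕ∞ :=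
  sSup {n : ℕ∞ | ∃ m : ℕ, n = m ∧ ∃ Y u, G.AltWalk v X Y u m}

/-- `b(v,X,Y,0) = min {a(v,X,Y,0), R}`. -/
noncomputable def bnd (R : ℕ) (v : V) (X Y : Bool) : ℕ∞ :=
  min (G.walkInf v X Y) (R : ℕ∞)

/-- `B(v,X) = min {A(v,X), R}`. -/
noncomputable def Bnd (R : ℕ) (v : V) (X : Bool) : ℕ∞ :=
  min (G.walkSup v X) (R : ℕ∞)

/-- The value `p_v` chosen by the local algorithm:
`p_v = b(v,I,K,0)` if `a(v,K,K,0) ≤ R`, and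
`p_v = min {b(v,I,K,0), B(v,K)}` otherwise. -/
noncomputable def pv (R : ℕ) (v : V) : ℕ∞ :=
  if G.walkInf v true true ≤ (R : ℕ∞) then G.bnd R v false true
  else min (G.bnd R v false true) (G.Bnd R v true)

/-- The value `q_v` chosen by the local algorithm:
`q_v = b(v,K,K,0)` if `a(v,I,K,0) ≤ R`, and
`q_v = min {b(v,K,K,0), B(v,I)}` otherwise. -/
noncomputable def qv (R : ℕ) (v : V) : ℕ∞ :=
  if G.walkInf v false true ≤ (R : ℕ∞) then G.bnd R v true true
  else min (G.bnd R v true true) (G.Bnd R v false)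

open Classical in
/-- The output value of the local algorithm: `p_v / (p_v + q_v)` at an x-vertex
`v`, and `0` at a 0-vertex. -/
noncomputable def xval (R : ℕ) (v : V) : ℝ :=
  if G.isX v then
    ((G.pv R v).toNat : ℝ) / (((G.pv R v).toNat : ℝ) + ((G.qv R v).toNat : ℝ))
  else 0

/-- Structural assumptions: every x-vertex is incident to at least one K-edge
and at least one I-edge, every 0-vertex is incident to exactly one edge, and
every edge has at least one x-vertex endpoint. -/
def WellFormed : Prop :=
  (∀ v, G.isX v → ∃ e, v ∈ G.ends e ∧ G.isK e) ∧
  (∀ v, G.isX v → ∃ e, v ∈ G.ends e ∧ ¬ G.isK e) ∧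
  (∀ v, ¬ G.isX v → ∃! e, v ∈ G.ends e) ∧
  (∀ e a b, G.Joins e a b → G.isX a ∨ G.isX b)

/-- A feasible solution: nonnegative, zero at 0-vertices, and satisfying
`x a + x b ≤ 1` for every I-edge `{a, b}`. -/
def Feasible (x : V → ℝ) : Prop :=
  (∀ a, 0 ≤ x a) ∧ (∀ a, ¬ G.isX a → x a = 0) ∧
  (∀ e a b, G.Joins e a b → ¬ G.isK e → x a + x b ≤ 1)

/-- The utility `ω(x)` of a solution: the minimum (infimum) over K-edges
`{a, b}` of `x a + x b`. -/
noncomputable def utility (x : V → ℝ) : ℝ :=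
  sInf {r : ℝ | ∃ e a b, G.Joins e a b ∧ G.isK e ∧ r = x a + x b}

end ColoredMultigraph

namespace ColoredMultigraph
variable {V E : Type} (G : ColoredMultigraph V E)

lemma altWalk_K_pos {a : V} {c c' : Bool} {w : V} {n : ℕ}
    (h : G.AltWalk a c c' w n) (hc' : c' = true) : 1 ≤ n := by
  induction h with
  | single e a b c hj hk => subst hc'; simp
  | cons e a b c c' w n hj hk hw ih =>
      have := ih hc'
      cases c <;> simp <;> omega

lemma altWalk_sum {x : V → ℝ} {ω : ℝ}
    (hxI : ∀ e a b, G.Joins e a b → ¬ G.isK e → x a + x b ≤ 1)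
    (hxK : ∀ e a b, G.Joins e a b → G.isK e → ω ≤ x a + x b)
    {a : V} {c c' : Bool} {w : V} {n : ℕ} (h : G.AltWalk a c c' w n) :
    (cond c (-1) 1 : ℝ) * x a + (cond c' (-1) 1 : ℝ) * x w
      ≤ (n : ℝ) + (cond c 0 1 : ℝ) + (cond c' 0 1 : ℝ) - 1 - n * ω := by
  induction h with
  | single e a b c hj hk =>
      cases c with
      | false =>
          have h1 := hxI e a b hj (by simp at hk; exact hk)
          simp
          linarith
      | true =>
          have h1 := hxK e a b hj (hk.mpr rfl)
          simp
          linarith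
  | cons e a b c c' w n hj hk hw ih =>
      cases c with
      | false =>
          have h1 := hxI e a b hj (by simp at hk; exact hk)
          simp at ih ⊢
          push_cast
          linarith
      | true =>
          have h1 := hxK e a b hj (hk.mpr rfl)
          simp at ih ⊢
          push_cast
          linarith

end ColoredMultigraph

theorem stmt_12 {V E : Type} (G : ColoredMultigraph V E) (hG : G.WellFormed)
    (R : ℕ) (hR : 1 ≤ R) (v u : V) (hv : G.isX v) (hu : ¬ G.isX u)
    (hadj : ∃ e, G.Joins e v u ∧ G.isK e)
    (xstar : V → ℝ) (hxstar : G.Feasible xstar) :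
    G.xval R u = 0 ∧
      (1 - 1 / (R : ℝ)) * G.utility xstar ≤ G.xval R v + G.xval R u := by
  obtain ⟨e0, hj0, hK0⟩ := hadj
  obtain ⟨hpos, hzero, hIfeas⟩ := hxstar
  set ω := G.utility xstar with hωdef
  -- basic facts about ω
  have hSne : {r : ℝ | ∃ e a b, G.Joins e a b ∧ G.isK e ∧ r = xstar a + xstar b}.Nonempty :=
    ⟨xstar v + xstar u, e0, v, u, hj0, hK0, rfl⟩
  have hSbdd : BddBelow {r : ℝ | ∃ e a b, G.Joins e a b ∧ G.isK e ∧ r = xstar a + xstar b} := by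
    refine ⟨0, ?_⟩
    rintro r ⟨e, a, b, -, -, rfl⟩
    exact add_nonneg (hpos a) (hpos b)
  have hωK : ∀ e a b, G.Joins e a b → G.isK e → ω ≤ xstar a + xstar b := by
    intro e a b hj hK
    exact csInf_le hSbdd ⟨e, a, b, hj, hK, rfl⟩
  have hω0 : 0 ≤ ω := by
    refine le_csInf hSne ?_
    rintro r ⟨e, a, b, -, -, rfl⟩
    exact add_nonneg (hpos a) (hpos b)
  have hxu0 : xstar u = 0 := hzero u hu
  have hωxv : ω ≤ xstar v := by
    have := hωK e0 v u hj0 hK0; linarith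
  have hxv1 : xstar v ≤ 1 := by
    obtain ⟨e', he'v, he'I⟩ := hG.2.1 v hv
    obtain ⟨w, hw⟩ := Sym2.mem_iff_exists.mp he'v
    have := hIfeas e' v w hw he'I
    have := hpos w
    linarith
  have hω1 : ω ≤ 1 := le_trans hωxv hxv1
  -- the single-edge K-walk from v to u
  have hw1 : G.AltWalk v true true u 1 := by
    have := ColoredMultigraph.AltWalk.single (G := G) e0 v u true hj0 (by simp [hK0])
    simpa using this
  have hwtt : G.walkInf v true true ≤ 1 := by
    refine sInf_le ?_
    exact ⟨1, by simp, u, hw1, hu⟩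
  have hR1 : (1 : ℕ∞) ≤ (R : ℕ∞) := by exact_mod_cast hR
  -- p_v
  have hpv : G.pv R v = min (G.walkInf v false true) (R : ℕ∞) := by
    rw [ColoredMultigraph.pv, if_pos (le_trans hwtt hR1)]
    rfl
  -- q_v ≤ 1
  have hqle : G.qv R v ≤ 1 := by
    have hb : G.bnd R v true true ≤ 1 := le_trans (min_le_left _ _) hwtt
    rw [ColoredMultigraph.qv]
    split
    · exact hb
    · exact le_trans (min_le_left _ _) hb
  set p := (G.pv R v).toNat with hp
  set q := (G.qv R v).toNat with hq
  have hq1 : q ≤ 1 := by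
    have := ENat.toNat_le_toNat hqle (by simp)
    simpa using this
  -- key facts about p
  have hpfact : 1 ≤ p ∧ ((R : ℝ) ≤ p ∨ ω * (p + 1) ≤ p) := by
    by_cases hc : G.walkInf v false true < (R : ℕ∞)
    · -- the inf is attained at some m₀
      set T := {m : ℕ | ∃ w, G.AltWalk v false true w m ∧ ¬ G.isX w} with hT
      have hTne : T.Nonempty := by
        by_contra hTe
        have : {n : ℕ∞ | ∃ m : ℕ, n = m ∧ ∃ w, G.AltWalk v false true w m ∧ ¬ G.isX w} = ∅ := by
          ext n
          simp only [Set.mem_setOf_eq, Set.mem_empty_iff_false, iff_false]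
          rintro ⟨m, -, hm⟩
          exact hTe ⟨m, hm⟩
        rw [ColoredMultigraph.walkInf, this, sInf_empty] at hc
        exact (not_top_lt hc)
      set m0 := sInf T with hm0
      obtain ⟨w0, hwalk0, hw0⟩ := Nat.sInf_mem hTne
      have heq : G.walkInf v false true = (m0 : ℕ∞) := by
        apply le_antisymm
        · exact sInf_le ⟨m0, rfl, w0, hwalk0, hw0⟩
        · refine le_sInf ?_
          rintro n ⟨m, rfl, hm⟩
          exact_mod_cast Nat.sInf_le hm
      have hm0R : (m0 : ℕ∞) ≤ (R : ℕ∞) := heq ▸ hc.le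
      have hpm0 : p = m0 := by
        rw [hp, hpv, heq, min_eq_left hm0R, ENat.toNat_coe]
      have hm0pos : 1 ≤ m0 := G.altWalk_K_pos hwalk0 rfl
      constructor
      · omega
      · right
        have hsum := G.altWalk_sum hIfeas hωK hwalk0
        simp at hsum
        have hxw0 : xstar w0 = 0 := hzero w0 hw0
        rw [hpm0]
        push_cast
        nlinarith
    · have hpR : p = R := by
        rw [hp, hpv, min_eq_right (le_of_not_gt hc), ENat.toNat_coe]
      constructor
      · omega
      · left; rw [hpR]
  obtain ⟨hp1, hpor⟩ := hpfact
  -- compute xval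
  have hxu : G.xval R u = 0 := by simp [ColoredMultigraph.xval, hu]
  have hxv : G.xval R v = (p : ℝ) / ((p : ℝ) + (q : ℝ)) := by
    simp [ColoredMultigraph.xval, hv]
    rfl
  refine ⟨hxu, ?_⟩
  rw [hxu, hxv, add_zero]
  have hRpos : (0 : ℝ) < R := by exact_mod_cast hR
  have hRinv : 1 / (R : ℝ) * R = 1 := by field_simp
  have hRinv0 : 0 ≤ 1 / (R : ℝ) := by positivity
  have hRinv1 : 1 / (R : ℝ) ≤ 1 := by
    rw [div_le_one hRpos]; exact_mod_cast hR
  have hppos : (0 : ℝ) < p := by exact_mod_cast hp1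
  interval_cases q
  · rw [Nat.cast_zero, add_zero, div_self (ne_of_gt hppos)]
    nlinarith
  · rw [Nat.cast_one]
    have hpq : (0 : ℝ) < (p : ℝ) + 1 := by linarith
    rw [le_div_iff₀ hpq]
    push_cast
    rcases hpor with h | h
    · have h2 : 1 / (R : ℝ) * R ≤ 1 / (R : ℝ) * ((p : ℝ) + 1) :=
        mul_le_mul_of_nonneg_left (by linarith) hRinv0
      nlinarith [mul_nonneg (mul_nonneg (sub_nonneg.mpr hRinv1) (sub_nonneg.mpr hω1))
        (le_of_lt hpq)]
    · nlinarith
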